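/- arXiv:math/0108210 — 3 statements merged into one kernel-verified Lean document; each statement's English description precedes it below -/
import Mathlib

section
/- If ξ is a real number of Diophantine type (K, σ) (i.e. |ξ - p/q| ≥ K q^{-σ-2} for all integers p and positive integers q), then the denominators q_n of the convergents of the continued fraction expansion of ξ satisfy q_{n+1} = O(q_n^{σ+1}), and consequently ∑_n (log q_{n+1})/q_n < ∞, i.e. ξ is a Bruno number. -/
open GenContFract Real

namespace BrunoAux

/-- For a never-terminating continued fraction expansion, every entry of the sequence exists,
has partial numerator `1`, and an integer partial denominator which is at least `1`. -/
lemma s_spec (ξ : ℝ) (hnt : ∀ n, ¬(GenContFract.of ξ).TerminatedAt n) (n : ℕ) :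
    ∃ gp : GenContFract.Pair ℝ, (GenContFract.of ξ).s.get? n = some gp ∧ gp.a = 1 ∧
      (∃ z : ℤ, gp.b = (z : ℝ)) ∧ 1 ≤ gp.b := by
  have hne : (GenContFract.of ξ).s.get? n ≠ none := fun hn =>
    hnt n (GenContFract.terminatedAt_iff_s_none.2 hn)
  obtain ⟨gp, hgp⟩ := Option.ne_none_iff_exists'.1 hne
  obtain ⟨ha, hz⟩ := GenContFract.of_partNum_eq_one_and_exists_int_partDen_eq hgp
  exact ⟨gp, hgp, ha, hz, GenContFract.of_one_le_get?_partDen (GenContFract.partDen_eq_s_b hgp)⟩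

/-- Numerators and denominators of the convergents are integers. -/
lemma conts_int (ξ : ℝ) (hnt : ∀ n, ¬(GenContFract.of ξ).TerminatedAt n) (n : ℕ) :
    (∃ z : ℤ, (GenContFract.of ξ).nums n = (z : ℝ)) ∧
      ∃ z : ℤ, (GenContFract.of ξ).dens n = (z : ℝ) := by
  have key : ∀ m : ℕ,
      (((∃ z : ℤ, (GenContFract.of ξ).nums m = (z : ℝ)) ∧
        ∃ z : ℤ, (GenContFract.of ξ).dens m = (z : ℝ)) ∧
      ((∃ z : ℤ, (GenContFract.of ξ).nums (m + 1) = (z : ℝ)) ∧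
        ∃ z : ℤ, (GenContFract.of ξ).dens (m + 1) = (z : ℝ))) := by
    intro m
    induction m with
    | zero =>
      obtain ⟨gp, hgp, ha, ⟨z, hb⟩, -⟩ := s_spec ξ hnt 0
      refine ⟨⟨⟨⌊ξ⌋, ?_⟩, ⟨1, ?_⟩⟩, ⟨z * ⌊ξ⌋ + 1, ?_⟩, ⟨z, ?_⟩⟩
      · rw [GenContFract.zeroth_num_eq_h, GenContFract.of_h_eq_floor]
      · rw [GenContFract.zeroth_den_eq_one]; norm_num
      · rw [GenContFract.first_num_eq hgp, hb, ha, GenContFract.of_h_eq_floor]; push_cast; ring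
      · rw [GenContFract.first_den_eq hgp, hb]
    | succ m ih =>
      obtain ⟨⟨⟨za, hza⟩, ⟨zb, hzb⟩⟩, ⟨za', hza'⟩, ⟨zb', hzb'⟩⟩ := ih
      obtain ⟨gp, hgp, ha, ⟨z, hb⟩, -⟩ := s_spec ξ hnt (m + 1)
      refine ⟨⟨⟨za', hza'⟩, ⟨zb', hzb'⟩⟩, ⟨z * za' + za, ?_⟩, ⟨z * zb' + zb, ?_⟩⟩
      · rw [GenContFract.nums_recurrence hgp hza hza', ha, hb]; push_cast; ring
      · rw [GenContFract.dens_recurrence hgp hzb hzb', ha, hb]; push_cast; ring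
  exact (key n).1

/-- Denominators are at least one. -/
lemma one_le_dens (ξ : ℝ) (hnt : ∀ n, ¬(GenContFract.of ξ).TerminatedAt n) (n : ℕ) :
    (1 : ℝ) ≤ (GenContFract.of ξ).dens n := by
  have h := GenContFract.succ_nth_fib_le_of_nth_den (v := ξ) (n := n) (Or.inr (hnt _))
  refine le_trans ?_ h
  exact_mod_cast Nat.fib_pos.2 n.succ_pos

/-- Exponential growth of the denominators. -/
lemma dens_growth (ξ : ℝ) (hnt : ∀ n, ¬(GenContFract.of ξ).TerminatedAt n) (k : ℕ) :
    (2 : ℝ) ^ k ≤ (GenContFract.of ξ).dens (2 * k) := by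
  induction k with
  | zero => simp [GenContFract.zeroth_den_eq_one]
  | succ k ih =>
    obtain ⟨gp, hgp, ha, -, hb1⟩ := s_spec ξ hnt (2 * k + 1)
    have hrec := GenContFract.dens_recurrence (g := GenContFract.of ξ) (n := 2 * k) hgp rfl rfl
    have hmono := GenContFract.of_den_mono (v := ξ) (n := 2 * k)
    have hnn : (0 : ℝ) ≤ (GenContFract.of ξ).dens (2 * k + 1) := GenContFract.zero_le_of_den
    have h22 : 2 * (k + 1) = 2 * k + 1 + 1 := by ring
    rw [h22, hrec, ha, one_mul, pow_succ]
    nlinarith [mul_nonneg (sub_nonneg.2 hb1) hnn]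

end BrunoAux

/-- If `ξ` is of Diophantine type `(K, σ)`, then the denominators of its continued
fraction convergents satisfy `q_{n+1} = O(q_n^{σ+1})`, and hence `ξ` is a Bruno number. -/
theorem diophType_is_bruno (ξ K σ : ℝ) (hK : 0 < K) (hσ : 0 < σ)
    (h : ∀ (p : ℤ) (q : ℕ), 0 < q → |ξ - (p : ℝ) / (q : ℝ)| ≥ K * (q : ℝ) ^ (-σ - 2)) :
    (∃ C > 0, ∀ n : ℕ, (GenContFract.of ξ).dens (n + 1) ≤
        C * ((GenContFract.of ξ).dens n) ^ (σ + 1)) ∧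
      Summable (fun n : ℕ =>
        Real.log ((GenContFract.of ξ).dens (n + 1)) / (GenContFract.of ξ).dens n) := by
  -- `ξ` is irrational, hence the continued fraction never terminates
  have hnt : ∀ n, ¬(GenContFract.of ξ).TerminatedAt n := by
    intro n hn
    obtain ⟨q, rfl⟩ := (GenContFract.terminates_iff_rat (K := ℝ) ξ).1 ⟨n, hn⟩
    have h0 := h q.num q.den q.pos
    rw [Rat.cast_def, sub_self, abs_zero] at h0
    have hpos : (0 : ℝ) < K * ((q.den : ℕ) : ℝ) ^ (-σ - 2) :=
      mul_pos hK (Real.rpow_pos_of_pos (by exact_mod_cast q.pos) _)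
    linarith
  have hA1 : ∀ n, (1 : ℝ) ≤ (GenContFract.of ξ).dens n := BrunoAux.one_le_dens ξ hnt
  have hA0 : ∀ n, (0 : ℝ) < (GenContFract.of ξ).dens n := fun n => lt_of_lt_of_le one_pos (hA1 n)
  -- the main estimate
  have main : ∀ n, (GenContFract.of ξ).dens (n + 1) ≤
      K⁻¹ * ((GenContFract.of ξ).dens n) ^ (σ + 1) := by
    intro n
    set A := (GenContFract.of ξ).dens n with hAdef
    set B := (GenContFract.of ξ).dens (n + 1) with hBdef
    obtain ⟨⟨za, hza⟩, ⟨zb, hzb⟩⟩ := BrunoAux.conts_int ξ hnt n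
    have hzb1R : (1 : ℝ) ≤ (zb : ℝ) := hzb ▸ hA1 n
    have hzb1 : (1 : ℤ) ≤ zb := by exact_mod_cast hzb1R
    set q : ℕ := zb.toNat with hqdef
    have hq : (q : ℝ) = A := by
      rw [hAdef, hzb]
      exact_mod_cast congrArg (fun z : ℤ => (z : ℝ)) (Int.toNat_of_nonneg (by linarith))
    have hqpos : 0 < q := by omega
    have h1 := h za q hqpos
    have hconv : (za : ℝ) / (q : ℝ) = (GenContFract.of ξ).convs n := by
      rw [GenContFract.conv_eq_num_div_den, hza, hq]
    have h2 := GenContFract.abs_sub_convs_le (v := ξ) (hnt n)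
    have h3 : K * A ^ (-σ - 2) ≤ 1 / (A * B) := by
      calc K * A ^ (-σ - 2) = K * (q : ℝ) ^ (-σ - 2) := by rw [hq]
        _ ≤ |ξ - (za : ℝ) / (q : ℝ)| := h1
        _ = |ξ - (GenContFract.of ξ).convs n| := by rw [hconv]
        _ ≤ 1 / (A * B) := h2
    have hA := hA0 n
    have hB := hA0 (n + 1)
    have hP : (0 : ℝ) < A ^ (σ + 2) := Real.rpow_pos_of_pos hA _
    have e1 : A ^ (-σ - 2) = (A ^ (σ + 2))⁻¹ := by
      rw [show -σ - 2 = -(σ + 2) by ring, Real.rpow_neg hA.le]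
    have e2 : A ^ (σ + 2) = A ^ (σ + 1) * A := by
      rw [show σ + 2 = σ + 1 + 1 by ring, Real.rpow_add hA, Real.rpow_one]
    rw [e1, ← div_eq_mul_inv] at h3
    have h4 : K * (A * B) ≤ 1 * A ^ (σ + 2) := (div_le_div_iff₀ hP (mul_pos hA hB)).1 h3
    rw [one_mul, e2] at h4
    have h5 : B * K ≤ A ^ (σ + 1) := by
      have h4' : (B * K) * A ≤ A ^ (σ + 1) * A := by nlinarith [h4]
      exact le_of_mul_le_mul_right h4' hA
    rw [inv_mul_eq_div, le_div_iff₀ hK]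
    exact h5
  -- summability
  have hC : (0 : ℝ) < K⁻¹ := inv_pos.2 hK
  set M : ℝ := |Real.log K⁻¹| + (σ + 1) with hMdef
  have hM0 : 0 < M := by have := abs_nonneg (Real.log K⁻¹); positivity
  set r : ℝ := (2 : ℝ) ^ (-(1 / 4) : ℝ) with hrdef
  have hr0 : 0 ≤ r := (Real.rpow_pos_of_pos two_pos _).le
  have hr1 : r < 1 := Real.rpow_lt_one_of_one_lt_of_neg one_lt_two (by norm_num)
  set D : ℝ := 2 * M * (2 : ℝ) ^ ((1 : ℝ) / 2) with hDdef
  have hsum : Summable (fun n : ℕ => D * r ^ n) :=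
    (summable_geometric_of_lt_one hr0 hr1).mul_left D
  refine ⟨⟨K⁻¹, hC, main⟩, Summable.of_nonneg_of_le ?_ ?_ hsum⟩
  · intro n
    exact div_nonneg (Real.log_nonneg (hA1 (n + 1))) (hA0 n).le
  · intro n
    have hmonoD : Monotone (GenContFract.of ξ).dens :=
      monotone_nat_of_le_succ fun m => GenContFract.of_den_mono
    set A := (GenContFract.of ξ).dens n with hAdef
    set B := (GenContFract.of ξ).dens (n + 1) with hBdef
    have hA := hA0 n
    have hB := hA0 (n + 1)
    set s : ℝ := A ^ ((1 : ℝ) / 2) with hsdef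
    have hs0 : 0 < s := Real.rpow_pos_of_pos hA _
    have hss : s * s = A := by
      rw [hsdef, ← Real.rpow_add hA]; norm_num; rfl
    have hlogA0 : 0 ≤ Real.log A := Real.log_nonneg (hA1 n)
    have hlogA : Real.log A ≤ 2 * (s - 1) := by
      have h1 : Real.log s = (1 / 2) * Real.log A := Real.log_rpow hA _
      have h2 : Real.log s ≤ s - 1 := Real.log_le_sub_one_of_pos hs0
      linarith
    have hlogB : Real.log B ≤ Real.log K⁻¹ + (σ + 1) * Real.log A := by
      have h1 : Real.log B ≤ Real.log (K⁻¹ * A ^ (σ + 1)) := Real.log_le_log hB (main n)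
      rwa [Real.log_mul hC.ne' (Real.rpow_pos_of_pos hA _).ne', Real.log_rpow hA] at h1
    have hnum : Real.log B ≤ M * (1 + Real.log A) := by
      have habs : Real.log K⁻¹ ≤ |Real.log K⁻¹| := le_abs_self _
      have habs0 : 0 ≤ |Real.log K⁻¹| := abs_nonneg _
      rw [hMdef]
      nlinarith [hlogB, hlogA0]
    have hstep1 : Real.log B / A ≤ M * (1 + Real.log A) / A := by gcongr
    have hstep2 : M * (1 + Real.log A) / A ≤ 2 * M / s := by
      have hnum2 : M * (1 + Real.log A) ≤ M * (2 * s) := by nlinarith [hlogA, hM0.le, hs0.le]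
      calc M * (1 + Real.log A) / A ≤ M * (2 * s) / A := by gcongr
        _ = 2 * M / s := by rw [← hss]; field_simp
    have hgrow : (2 : ℝ) ^ (((n : ℝ) / 2 - 1) * (1 / 2)) ≤ s := by
      have hnat : (2 : ℝ) ^ (n / 2 : ℕ) ≤ A :=
        le_trans (BrunoAux.dens_growth ξ hnt (n / 2)) (hmonoD (by omega : 2 * (n / 2) ≤ n))
      have hexp : (n : ℝ) / 2 - 1 ≤ ((n / 2 : ℕ) : ℝ) := by
        have h2n : (n : ℝ) ≤ 2 * ((n / 2 : ℕ) : ℝ) + 1 := by exact_mod_cast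
          (by omega : n ≤ 2 * (n / 2) + 1)
        linarith
      have hA2 : (2 : ℝ) ^ ((n : ℝ) / 2 - 1) ≤ A := by
        calc (2 : ℝ) ^ ((n : ℝ) / 2 - 1) ≤ (2 : ℝ) ^ (((n / 2 : ℕ) : ℝ)) :=
              Real.rpow_le_rpow_of_exponent_le one_le_two hexp
          _ = (2 : ℝ) ^ (n / 2 : ℕ) := Real.rpow_natCast 2 (n / 2)
          _ ≤ A := hnat
      calc (2 : ℝ) ^ (((n : ℝ) / 2 - 1) * (1 / 2))
          = ((2 : ℝ) ^ ((n : ℝ) / 2 - 1)) ^ ((1 : ℝ) / 2) := by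
            rw [← Real.rpow_mul (by norm_num : (0 : ℝ) ≤ 2)]
        _ ≤ A ^ ((1 : ℝ) / 2) :=
            Real.rpow_le_rpow (Real.rpow_pos_of_pos two_pos _).le hA2 (by norm_num)
    have hexp2 : -(((n : ℝ) / 2 - 1) * (1 / 2)) = 1 / 2 + -(1 / 4) * (n : ℝ) := by ring
    have hfinal : 2 * M / (2 : ℝ) ^ (((n : ℝ) / 2 - 1) * (1 / 2)) = D * r ^ n := by
      rw [div_eq_mul_inv, ← Real.rpow_neg (by norm_num : (0 : ℝ) ≤ 2), hexp2,
        Real.rpow_add two_pos, Real.rpow_mul (by norm_num : (0 : ℝ) ≤ 2),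
        Real.rpow_natCast, hDdef, hrdef]
      ring
    calc Real.log B / A ≤ M * (1 + Real.log A) / A := hstep1
      _ ≤ 2 * M / s := hstep2
      _ ≤ 2 * M / (2 : ℝ) ^ (((n : ℝ) / 2 - 1) * (1 / 2)) := by
          apply div_le_div_of_nonneg_left (by positivity) (by positivity) hgrow
      _ = D * r ^ n := hfinal
end

section
/- If the multivariable sum ∑_{q ∈ ℤ^m, q ≠ 0} |q|^{m-1} ψ(|q|)^n converges (where |q| = max_i |q_i|), then the set of m×n real matrices X for which ‖qX‖ < ψ(|q|) holds for infinitely many q ∈ ℤ^m has Lebesgue measure zero in ℝ^{mn}. -/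
/-- Distance from a real number to the nearest integer. -/
noncomputable def nint (x : ℝ) : ℝ := |x - round x|

/-- The height `|q| = max_i |q_i|` of an integer vector. -/
def height {m : ℕ} (q : Fin m → ℤ) : ℕ := Finset.univ.sup fun i => (q i).natAbs

open MeasureTheory Set Filter

lemma measurable_nint : Measurable nint := by
  have : nint = fun x => |Int.fract (x + 1/2) - 1/2| := by
    funext x
    rw [nint, round_eq, Int.fract]
    ring_nf
  rw [this]
  exact ((measurable_fract.comp (measurable_id.add_const _)).sub_const _).abs

lemma nint_add_int (x : ℝ) (k : ℤ) : nint (x + k) = nint x := by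
  rw [nint, nint, round_add_intCast]
  push_cast
  ring_nf

lemma nint_nonneg (x : ℝ) : 0 ≤ nint x := abs_nonneg _

lemma cover (b : ℤ) (hb : 0 < b) (c δ : ℝ) (hδ0 : 0 ≤ δ) :
    volume {t : ℝ | t ∈ Set.Ico (0:ℝ) 1 ∧ ∃ k : ℤ, |b * t + c - k| < δ} ≤
      ENNReal.ofReal (4 * δ) := by
  rcases le_or_gt δ (1/2) with hδ | hδ
  · set K : ℤ := ⌊c - δ⌋ with hK
    have hsub : {t : ℝ | t ∈ Set.Ico (0:ℝ) 1 ∧ ∃ k : ℤ, |b * t + c - k| < δ} ⊆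
        ⋃ k ∈ Finset.Icc (K+1) (K+b+1), Set.Ioo (((k:ℝ) - c - δ)/b) (((k:ℝ) - c + δ)/b) := by
      rintro t ⟨⟨ht0, ht1⟩, k, hk⟩
      have hbR : (0:ℝ) < b := by exact_mod_cast hb
      rw [abs_lt] at hk
      have h1 : (k:ℝ) > c - δ := by nlinarith
      have h2 : (k:ℝ) < b + c + δ := by nlinarith
      have hKle : (K:ℝ) ≤ c - δ := Int.floor_le _
      have hKgt : c - δ < (K:ℝ) + 1 := Int.lt_floor_add_one _
      have hk1 : K + 1 ≤ k := by
        have : (K:ℝ) < k := lt_of_le_of_lt hKle h1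
        exact_mod_cast Int.add_one_le_of_lt (by exact_mod_cast this)
      have hk2 : k ≤ K + b + 1 := by
        have : (k:ℝ) < (K:ℝ) + (b:ℝ) + 1 + 2*δ := by linarith
        have h2δ : 2*δ ≤ 1 := by linarith
        have : (k:ℝ) < (K:ℝ) + (b:ℝ) + 2 := by linarith
        have : k < K + b + 2 := by exact_mod_cast this
        omega
      refine Set.mem_biUnion (Finset.mem_Icc.mpr ⟨hk1, hk2⟩) ?_
      constructor
      · rw [div_lt_iff₀ hbR]; linarith [mul_comm (b:ℝ) t]
      · rw [lt_div_iff₀ hbR]; linarith [mul_comm (b:ℝ) t]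
    calc volume {t : ℝ | t ∈ Set.Ico (0:ℝ) 1 ∧ ∃ k : ℤ, |b * t + c - k| < δ}
        ≤ volume (⋃ k ∈ Finset.Icc (K+1) (K+b+1),
            Set.Ioo (((k:ℝ) - c - δ)/b) (((k:ℝ) - c + δ)/b)) := measure_mono hsub
      _ ≤ ∑ k ∈ Finset.Icc (K+1) (K+b+1),
            volume (Set.Ioo (((k:ℝ) - c - δ)/b) (((k:ℝ) - c + δ)/b)) :=
          measure_biUnion_finset_le _ _
      _ ≤ ENNReal.ofReal (4 * δ) := by
          have hbR : (0:ℝ) < b := by exact_mod_cast hb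
          have hvol : ∀ k : ℤ, volume (Set.Ioo (((k:ℝ) - c - δ)/b) (((k:ℝ) - c + δ)/b)) =
              ENNReal.ofReal (2*δ/b) := by
            intro k
            rw [Real.volume_Ioo]
            congr 1
            field_simp
            ring
          simp only [hvol, Finset.sum_const]
          have hcard : (Finset.Icc (K+1) (K+b+1)).card = (b+1).toNat := by
            rw [Int.card_Icc]; congr 1; omega
          rw [hcard, nsmul_eq_mul]
          rw [← ENNReal.ofReal_natCast, ← ENNReal.ofReal_mul (by positivity)]
          apply ENNReal.ofReal_le_ofReal
          have hbn : ((b+1).toNat : ℤ) = b + 1 := Int.toNat_of_nonneg (by omega)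
          have hcst : ((b+1).toNat : ℝ) = (b:ℝ) + 1 := by exact_mod_cast hbn
          rw [hcst, show ((b:ℝ)+1) * (2*δ/b) = (2*δ)*(((b:ℝ)+1)/b) by ring]
          have hq : ((b:ℝ)+1)/b ≤ 2 := by
            rw [div_le_iff₀ hbR]
            have hb1 : (1:ℝ) ≤ b := by exact_mod_cast hb
            linarith
          nlinarith
  · calc volume {t : ℝ | t ∈ Set.Ico (0:ℝ) 1 ∧ ∃ k : ℤ, |b * t + c - k| < δ}
        ≤ volume (Set.Ico (0:ℝ) 1) := measure_mono (fun t ht => ht.1)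
      _ ≤ ENNReal.ofReal (4 * δ) := by
          rw [Real.volume_Ico]
          apply ENNReal.ofReal_le_ofReal
          linarith

lemma oneDim (a : ℤ) (ha : a ≠ 0) (c δ : ℝ) (hδ0 : 0 ≤ δ) :
    volume {t : ℝ | t ∈ Set.Ico (0:ℝ) 1 ∧ nint (a * t + c) < δ} ≤ ENNReal.ofReal (4 * δ) := by
  set c' : ℝ := if 0 < a then c else -c with hc'
  refine le_trans (measure_mono ?_) (cover |a| (abs_pos.mpr ha) c' δ hδ0)
  rintro t ⟨ht, hnint⟩
  refine ⟨ht, ?_⟩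
  rcases lt_or_gt_of_ne ha with hneg | hpos
  · refine ⟨-round ((a:ℝ) * t + c), ?_⟩
    rw [hc', if_neg (by omega), abs_of_neg hneg]
    push_cast
    rw [show (-(a:ℝ)) * t + -c - -(round ((a:ℝ) * t + c)) =
      -((a:ℝ) * t + c - round ((a:ℝ) * t + c)) by ring, abs_neg]
    exact hnint
  · refine ⟨round ((a:ℝ) * t + c), ?_⟩
    rw [hc', if_pos hpos, abs_of_pos hpos]
    exact hnint

lemma mdim {m : ℕ} (q : Fin m → ℤ) (hq : q ≠ 0) (δ : ℝ) (hδ0 : 0 ≤ δ) :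
    volume {y : Fin m → ℝ | (∀ i, y i ∈ Set.Ico (0:ℝ) 1) ∧
      nint (∑ i, (q i : ℝ) * y i) < δ} ≤ ENNReal.ofReal (4 * δ) := by
  obtain ⟨m', rfl⟩ : ∃ m', m = m' + 1 := by
    cases m
    · exact absurd (funext fun i => absurd i.pos (by omega)) hq
    · exact ⟨_, rfl⟩
  obtain ⟨i0, hi0⟩ : ∃ i, q i ≠ 0 := Function.ne_iff.mp hq
  set S : Set (Fin (m' + 1) → ℝ) := {y | (∀ i, y i ∈ Set.Ico (0:ℝ) 1) ∧
      nint (∑ i, (q i : ℝ) * y i) < δ} with hS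
  have hSm : MeasurableSet S := by
    have h1 : MeasurableSet {y : Fin (m'+1) → ℝ | ∀ i, y i ∈ Set.Ico (0:ℝ) 1} := by
      have : {y : Fin (m'+1) → ℝ | ∀ i, y i ∈ Set.Ico (0:ℝ) 1} =
          Set.pi Set.univ (fun _ => Set.Ico (0:ℝ) 1) := by ext y; simp [Set.mem_pi]
      rw [this]
      exact MeasurableSet.univ_pi fun _ => measurableSet_Ico
    have hf : Measurable fun y : Fin (m'+1) → ℝ => nint (∑ i, (q i : ℝ) * y i) :=
      measurable_nint.comp (Finset.measurable_sum _ fun i _ =>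
        (measurable_pi_apply i).const_mul _)
    rw [hS, Set.setOf_and]
    exact h1.inter (hf measurableSet_Iio)
  set e := MeasurableEquiv.piFinSuccAbove (fun _ : Fin (m'+1) => ℝ) i0
  have hmp : MeasurePreserving e volume volume := volume_preserving_piFinSuccAbove _ i0
  have hTm : MeasurableSet (e.symm ⁻¹' S) := e.symm.measurable hSm
  have hST : S = e ⁻¹' (e.symm ⁻¹' S) := by
    ext y; simp
  rw [hST, hmp.measure_preimage hTm.nullMeasurableSet]
  have hT : e.symm ⁻¹' S = {p : ℝ × (Fin m' → ℝ) |
      (p.1 ∈ Set.Ico (0:ℝ) 1 ∧ nint ((q i0 : ℝ) * p.1 +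
        ∑ j, (q (i0.succAbove j) : ℝ) * p.2 j) < δ) ∧ ∀ j, p.2 j ∈ Set.Ico (0:ℝ) 1} := by
    ext ⟨t, z⟩
    have hy : e.symm (t, z) = Fin.insertNth (α := fun _ => ℝ) i0 t z := rfl
    have hsum : (∑ i, (q i : ℝ) * Fin.insertNth (α := fun _ => ℝ) i0 t z i) =
        (q i0:ℝ) * t + ∑ x, (q (i0.succAbove x):ℝ) * z x := by
      rw [Fin.sum_univ_succAbove (fun i => (q i : ℝ) * Fin.insertNth (α := fun _ => ℝ) i0 t z i) i0]
      simp
    have hfor : (∀ i, Fin.insertNth (α := fun _ => ℝ) i0 t z i ∈ Set.Ico (0:ℝ) 1) ↔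
        (t ∈ Set.Ico (0:ℝ) 1 ∧ ∀ j, z j ∈ Set.Ico (0:ℝ) 1) := by
      rw [(i0.forall_iff_succAbove : _ ↔ _)]
      simp
    simp only [Set.mem_preimage, hy, hS, Set.mem_setOf_eq, hsum, hfor]
    tauto
  rw [hT]
  have hprod : (volume : Measure (ℝ × (Fin m' → ℝ))) = Measure.prod volume volume := rfl
  have hTm' : MeasurableSet {p : ℝ × (Fin m' → ℝ) |
      (p.1 ∈ Set.Ico (0:ℝ) 1 ∧ nint ((q i0 : ℝ) * p.1 +
        ∑ j, (q (i0.succAbove j) : ℝ) * p.2 j) < δ) ∧ ∀ j, p.2 j ∈ Set.Ico (0:ℝ) 1} := by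
    rw [← hT]; exact hTm
  rw [hprod, Measure.prod_apply_symm hTm']
  have hbound : ∀ z : Fin m' → ℝ,
      volume ((fun t => (t, z)) ⁻¹' {p : ℝ × (Fin m' → ℝ) |
      (p.1 ∈ Set.Ico (0:ℝ) 1 ∧ nint ((q i0 : ℝ) * p.1 +
        ∑ j, (q (i0.succAbove j) : ℝ) * p.2 j) < δ) ∧ ∀ j, p.2 j ∈ Set.Ico (0:ℝ) 1}) ≤
      Set.indicator (Set.pi Set.univ fun _ : Fin m' => Set.Ico (0:ℝ) 1)
        (fun _ => ENNReal.ofReal (4 * δ)) z := by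
    intro z
    by_cases hz : ∀ j, z j ∈ Set.Ico (0:ℝ) 1
    · rw [Set.indicator_of_mem (by simpa [Set.mem_pi] using hz)]
      refine le_trans (measure_mono ?_) (oneDim (q i0) hi0 (∑ j, (q (i0.succAbove j) : ℝ) * z j) δ hδ0)
      intro t ht
      exact ⟨ht.1.1, ht.1.2⟩
    · have : ((fun t => (t, z)) ⁻¹' {p : ℝ × (Fin m' → ℝ) |
        (p.1 ∈ Set.Ico (0:ℝ) 1 ∧ nint ((q i0 : ℝ) * p.1 +
          ∑ j, (q (i0.succAbove j) : ℝ) * p.2 j) < δ) ∧ ∀ j, p.2 j ∈ Set.Ico (0:ℝ) 1}) = ∅ := by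
        ext t; simp only [Set.mem_preimage, Set.mem_setOf_eq, Set.mem_empty_iff_false, iff_false]
        tauto
      rw [this, measure_empty]
      exact zero_le
  calc ∫⁻ z, volume ((fun t => (t, z)) ⁻¹' _) ∂volume
      ≤ ∫⁻ z, Set.indicator (Set.pi Set.univ fun _ : Fin m' => Set.Ico (0:ℝ) 1)
        (fun _ => ENNReal.ofReal (4 * δ)) z ∂volume := lintegral_mono hbound
    _ = ENNReal.ofReal (4 * δ) * volume (Set.pi Set.univ fun _ : Fin m' => Set.Ico (0:ℝ) 1) := by
        rw [lintegral_indicator (MeasurableSet.univ_pi fun _ => measurableSet_Ico)]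
        simp [lintegral_const, Measure.restrict_apply .univ]
    _ ≤ ENNReal.ofReal (4 * δ) := by
        rw [volume_pi_pi]
        simp [Real.volume_Ico]

lemma matMeas {m n : ℕ} (q : Fin m → ℤ) (δ : ℝ) :
    MeasurableSet {X : Fin m → Fin n → ℝ | (∀ i j, X i j ∈ Set.Ico (0:ℝ) 1) ∧
      ∀ j, nint (∑ i, (q i : ℝ) * X i j) < δ} := by
  have hev : ∀ (i : Fin m) (j : Fin n), Measurable fun X : Fin m → Fin n → ℝ => X i j :=
    fun i j => (measurable_pi_apply j).comp (measurable_pi_apply i)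
  rw [Set.setOf_and]
  apply MeasurableSet.inter
  · have : {X : Fin m → Fin n → ℝ | ∀ i j, X i j ∈ Set.Ico (0:ℝ) 1} =
        ⋂ i, ⋂ j, (fun X : Fin m → Fin n → ℝ => X i j) ⁻¹' Set.Ico (0:ℝ) 1 := by
      ext X; simp
    rw [this]
    exact MeasurableSet.iInter fun i => MeasurableSet.iInter fun j =>
      (hev i j) measurableSet_Ico
  · have : {X : Fin m → Fin n → ℝ | ∀ j, nint (∑ i, (q i : ℝ) * X i j) < δ} =
        ⋂ j, (fun X : Fin m → Fin n → ℝ => nint (∑ i, (q i : ℝ) * X i j)) ⁻¹' Set.Iio δ := by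
      ext X; simp
    rw [this]
    exact MeasurableSet.iInter fun j =>
      (measurable_nint.comp (Finset.measurable_sum _ fun i _ => (hev i j).const_mul _))
        measurableSet_Iio

lemma matdim {m : ℕ} (q : Fin m → ℤ) (hq : q ≠ 0) (δ : ℝ) (hδ0 : 0 ≤ δ) :
    ∀ n : ℕ, volume {X : Fin m → Fin n → ℝ | (∀ i j, X i j ∈ Set.Ico (0:ℝ) 1) ∧
      ∀ j, nint (∑ i, (q i : ℝ) * X i j) < δ} ≤ ENNReal.ofReal (4 * δ) ^ n := by
  intro n
  induction n with
  | zero =>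
    have : {X : Fin m → Fin 0 → ℝ | (∀ i j, X i j ∈ Set.Ico (0:ℝ) 1) ∧
        ∀ j, nint (∑ i, (q i : ℝ) * X i j) < δ} = Set.univ :=
      Set.eq_univ_of_forall fun X => ⟨fun i j => j.elim0, fun j => j.elim0⟩
    rw [this, pow_zero]
    have : (volume : Measure (Fin m → Fin 0 → ℝ)) Set.univ = 1 := by
      rw [MeasureTheory.volume_pi, Measure.pi_univ]
      simp [MeasureTheory.volume_pi, Measure.pi_univ]
    rw [this]
  | succ n ih =>
    set e1 := MeasurableEquiv.piFinSuccAbove (fun _ : Fin (n+1) => ℝ) 0 with he1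
    have hmp1 : MeasurePreserving e1 volume volume := volume_preserving_piFinSuccAbove _ 0
    set e2 := MeasurableEquiv.arrowProdEquivProdArrow ℝ (Fin n → ℝ) (Fin m) with he2
    have hmp2 : MeasurePreserving e2 volume volume :=
      volume_measurePreserving_arrowProdEquivProdArrow _ _ _
    set E := (MeasurableEquiv.piCongrRight fun _ : Fin m => e1).trans e2 with hE
    have hmpE : MeasurePreserving (⇑E) volume volume := by
      have h1 : MeasurePreserving
          (fun (X : Fin m → Fin (n+1) → ℝ) (i : Fin m) => e1 (X i)) volume volume :=
        volume_preserving_pi fun _ => hmp1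
      exact hmp2.comp h1
    set M : Set (Fin m → Fin (n+1) → ℝ) := {X | (∀ i j, X i j ∈ Set.Ico (0:ℝ) 1) ∧
      ∀ j, nint (∑ i, (q i : ℝ) * X i j) < δ} with hM
    have hMm : MeasurableSet M := matMeas q δ
    have hMeq : M = ⇑E ⁻¹' (⇑E.symm ⁻¹' M) := by ext X; simp
    have hT : ⇑E.symm ⁻¹' M =
        ({y : Fin m → ℝ | (∀ i, y i ∈ Set.Ico (0:ℝ) 1) ∧ nint (∑ i, (q i : ℝ) * y i) < δ}) ×ˢ
        ({Z : Fin m → Fin n → ℝ | (∀ i j, Z i j ∈ Set.Ico (0:ℝ) 1) ∧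
          ∀ j, nint (∑ i, (q i : ℝ) * Z i j) < δ}) := by
      ext ⟨y, Z⟩
      have hX : ∀ i, E.symm (y, Z) i = Fin.insertNth (α := fun _ => ℝ) 0 (y i) (Z i) :=
        fun i => rfl
      have h0 : ∀ i, E.symm (y, Z) i 0 = y i := fun i => rfl
      have hs : ∀ i (j : Fin n), E.symm (y, Z) i j.succ = Z i j := by
        intro i j
        rw [hX i, ← Fin.succAbove_zero, Fin.insertNth_apply_succAbove]
      simp only [Set.mem_preimage, hM, Set.mem_setOf_eq, Set.mem_prod]
      constructor
      · rintro ⟨hA, hB⟩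
        refine ⟨⟨fun i => ?_, ?_⟩, ⟨fun i j => ?_, fun j => ?_⟩⟩
        · have := hA i 0; rwa [h0] at this
        · have := hB 0; simpa only [h0] using this
        · have := hA i j.succ; rwa [hs] at this
        · have := hB j.succ; simpa only [hs] using this
      · rintro ⟨⟨hy1, hy2⟩, hZ1, hZ2⟩
        constructor
        · intro i j
          rcases Fin.eq_zero_or_eq_succ j with rfl | ⟨j', rfl⟩
          · rw [h0]; exact hy1 i
          · rw [hs]; exact hZ1 i j'
        · intro j
          rcases Fin.eq_zero_or_eq_succ j with rfl | ⟨j', rfl⟩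
          · simpa only [h0] using hy2
          · simpa only [hs] using hZ2 j'
    rw [hMeq, hmpE.measure_preimage (E.symm.measurable hMm).nullMeasurableSet, hT]
    have : (volume : Measure ((Fin m → ℝ) × (Fin m → Fin n → ℝ))) = Measure.prod volume volume :=
      rfl
    rw [this, Measure.prod_prod, pow_succ]
    rw [mul_comm (ENNReal.ofReal (4*δ) ^ n) _]
    exact mul_le_mul' (mdim q hq δ hδ0) ih

lemma height_pos {m : ℕ} {q : Fin m → ℤ} (hq : q ≠ 0) : 1 ≤ height q := by
  obtain ⟨i, hi⟩ := Function.ne_iff.mp hq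
  calc 1 ≤ (q i).natAbs := Int.natAbs_pos.mpr hi
    _ ≤ height q := Finset.le_sup (f := fun i => (q i).natAbs) (Finset.mem_univ i)

/-- Convergence half of the Khintchine–Groshev theorem. -/
theorem khintchine_groshev_convergence (m n : ℕ) (hm : 0 < m) (hn : 0 < n)
    (ψ : ℕ → ℝ) (hψ : ∀ q, 0 ≤ ψ q)
    (hsum : Summable fun q : {q : Fin m → ℤ // q ≠ 0} =>
      ((height q.1 : ℝ)) ^ (m - 1) * (ψ (height q.1)) ^ n) :
    MeasureTheory.volume
      {X : Fin m → Fin n → ℝ |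
        {q : Fin m → ℤ | q ≠ 0 ∧
          ∀ j : Fin n, nint (∑ i, (q i : ℝ) * X i j) < ψ (height q)}.Infinite} = 0 := by
  classical
  set P : (Fin m → ℤ) → (Fin m → Fin n → ℝ) → Prop :=
    fun q X => ∀ j : Fin n, nint (∑ i, (q i : ℝ) * X i j) < ψ (height q) with hP
  set B : Set (Fin m → Fin n → ℝ) := {X | {q : Fin m → ℤ | q ≠ 0 ∧ P q X}.Infinite} with hB
  show volume B = 0
  -- invariance of P under integer translation
  have hPinv : ∀ (κ : Fin m → Fin n → ℤ) (q : Fin m → ℤ) (X : Fin m → Fin n → ℝ),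
      P q (fun i j => (κ i j : ℝ) + X i j) ↔ P q X := by
    intro κ q X
    have : ∀ j, nint (∑ i, (q i : ℝ) * ((κ i j : ℝ) + X i j)) =
        nint (∑ i, (q i : ℝ) * X i j) := by
      intro j
      have : (∑ i, (q i : ℝ) * ((κ i j : ℝ) + X i j)) =
          (∑ i, (q i : ℝ) * X i j) + ((∑ i, q i * κ i j : ℤ) : ℝ) := by
        push_cast
        rw [← Finset.sum_add_distrib]
        congr 1; ext i; ring
      rw [this, nint_add_int]
    simp only [hP, this]
  -- the cubes
  set C : (Fin m → Fin n → ℤ) → Set (Fin m → Fin n → ℝ) :=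
    fun κ => {X | ∀ i j, X i j - κ i j ∈ Set.Ico (0:ℝ) 1} with hC
  have hcover : B ⊆ ⋃ κ : Fin m → Fin n → ℤ, B ∩ C κ := by
    intro X hX
    refine Set.mem_iUnion.mpr ⟨fun i j => ⌊X i j⌋, hX, fun i j => ?_⟩
    constructor
    · linarith [Int.floor_le (X i j)]
    · linarith [Int.lt_floor_add_one (X i j)]
  refine le_antisymm ?_ zero_le
  refine le_trans (measure_mono hcover) (le_of_eq (measure_iUnion_null fun κ => ?_))
  -- reduce to the zero cube
  have hseteq : ∀ (κ : Fin m → Fin n → ℤ) (X : Fin m → Fin n → ℝ),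
      {q : Fin m → ℤ | q ≠ 0 ∧ P q (fun i j => (κ i j : ℝ) + X i j)} =
        {q : Fin m → ℤ | q ≠ 0 ∧ P q X} := by
    intro κ X
    ext q
    simp only [Set.mem_setOf_eq, hPinv]
  have hBinv : ∀ κ : Fin m → Fin n → ℤ,
      ((fun X : Fin m → Fin n → ℝ => (fun i j => (κ i j : ℝ) + X i j)) ⁻¹' (B ∩ C κ)) =
        B ∩ C 0 := by
    intro κ
    ext X
    simp only [Set.mem_preimage, Set.mem_inter_iff, hB, Set.mem_setOf_eq, hC]
    constructor
    · rintro ⟨h1, h2⟩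
      refine ⟨hseteq κ X ▸ h1, fun i j => ?_⟩
      have := h2 i j
      simp only [add_sub_cancel_left] at this
      simpa using this
    · rintro ⟨h1, h2⟩
      refine ⟨(hseteq κ X).symm ▸ h1, fun i j => ?_⟩
      have := h2 i j
      simp only [Pi.zero_apply, Int.cast_zero, sub_zero] at this
      simpa using this
  have htrans : volume (B ∩ C κ) = volume (B ∩ C 0) := by
    rw [← hBinv κ]
    have : (fun X : Fin m → Fin n → ℝ => (fun i j => (κ i j : ℝ) + X i j)) =
        (fun X : Fin m → Fin n → ℝ => (fun i j => (κ i j : ℝ)) + X) := by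
      funext X; funext i j; rfl
    rw [this, measure_preimage_add]
  rw [htrans]
  -- Borel-Cantelli
  set ι := {q : Fin m → ℤ // q ≠ 0} with hι
  set s : ι → Set (Fin m → Fin n → ℝ) := fun q =>
    {X | (∀ i j, X i j ∈ Set.Ico (0:ℝ) 1) ∧
      ∀ j, nint (∑ i, (q.1 i : ℝ) * X i j) < ψ (height q.1)} with hs
  have hsub : B ∩ C 0 ⊆ limsup s cofinite := by
    intro X ⟨hX1, hX2⟩
    have hX2' : ∀ i j, X i j ∈ Set.Ico (0:ℝ) 1 := by
      intro i j; have := hX2 i j; simpa using this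
    rw [mem_limsup_iff_frequently_mem, frequently_cofinite_iff_infinite]
    have himg : {q : Fin m → ℤ | q ≠ 0 ∧ P q X} =
        Subtype.val '' {q : ι | X ∈ s q} := by
      ext q
      simp only [Set.mem_setOf_eq, Set.mem_image]
      constructor
      · rintro ⟨h1, h2⟩
        exact ⟨⟨q, h1⟩, ⟨hX2', h2⟩, rfl⟩
      · rintro ⟨⟨q', hq'⟩, hmem, rfl⟩
        exact ⟨hq', hmem.2⟩
    intro hfin
    exact hX1 (himg ▸ (hfin.image Subtype.val))
  refine le_antisymm (le_trans (measure_mono hsub) ?_) zero_le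
  have hts : ∑' q : ι, volume (s q) ≠ ⊤ := by
    have hbound : ∀ q : ι, volume (s q) ≤ ENNReal.ofReal (4 * ψ (height q.1)) ^ n :=
      fun q => matdim q.1 q.2 (ψ (height q.1)) (hψ _) n
    have hg : Summable fun q : ι => (4 * ψ (height q.1)) ^ n := by
      refine Summable.of_nonneg_of_le
        (fun q => pow_nonneg (mul_nonneg (by norm_num : (0:ℝ) ≤ 4) (hψ _)) n) (fun q => ?_)
        (hsum.mul_left (4 ^ n))
      have h1 : (1:ℝ) ≤ (height q.1 : ℝ) ^ (m-1) :=
        one_le_pow₀ (by exact_mod_cast height_pos q.2)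
      have h2 : 0 ≤ ψ (height q.1) := hψ _
      have h3 : (0:ℝ) ≤ 4 ^ n := by positivity
      rw [mul_pow]
      exact mul_le_mul_of_nonneg_left
        (le_mul_of_one_le_left (pow_nonneg h2 n) h1) h3
    refine ne_top_of_le_ne_top ?_
      (ENNReal.tsum_le_tsum (fun q => hbound q))
    have hor : ∀ q : ι, ENNReal.ofReal (4 * ψ (height q.1)) ^ n =
        ENNReal.ofReal ((4 * ψ (height q.1)) ^ n) := by
      intro q
      rw [ENNReal.ofReal_pow (mul_nonneg (by norm_num : (0:ℝ) ≤ 4) (hψ _))]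
    simp only [hor]
    rw [← ENNReal.ofReal_tsum_of_nonneg
      (fun q => pow_nonneg (mul_nonneg (by norm_num : (0:ℝ) ≤ 4) (hψ _)) n) hg]
    exact ENNReal.ofReal_ne_top
  rw [measure_limsup_cofinite_eq_zero hts]
end

section
/- Suppose a : ℝ → ℂ is 1-periodic with Fourier coefficients a_k satisfying |a_k| < δ e^{-|k|ε} for all k ∈ ℤ and some δ, ε > 0, a_0 = 0, and ρ ∈ ℝ satisfies ‖kρ‖ ≥ K|k|^{-v} for all nonzero k ∈ ℤ and some K, v > 0. Then the series ∑_{k≠0} |a_k| / |e^{2πikρ} - 1| converges, so the formal solution h⁰ of the cohomological equation h⁰(t+ρ) − h⁰(t) = a(t), with Fourier coefficients h⁰_k = a_k/(e^{2πikρ} − 1), defines a continuous 1-periodic function. -/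
open Complex

-- |exp(x*I) - 1| = 2|sin(x/2)|
lemma aux_abs_exp_sub_one (x : ℝ) :
    ‖Complex.exp (x * I) - 1‖ = 2 * |Real.sin (x / 2)| := by
  have hsq : (‖Complex.exp (x * I) - 1‖) ^ 2 = (2 * |Real.sin (x / 2)|) ^ 2 := by
    rw [Complex.sq_norm, Complex.normSq_apply]
    simp only [Complex.sub_re, Complex.sub_im, Complex.one_re, Complex.one_im,
      Complex.exp_ofReal_mul_I_re, Complex.exp_ofReal_mul_I_im]
    have h1 : Real.sin (x / 2) ^ 2 = 1 / 2 - Real.cos (2 * (x / 2)) / 2 :=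
      Real.sin_sq_eq_half_sub _
    have h2 : Real.cos x ^ 2 + Real.sin x ^ 2 = 1 := Real.cos_sq_add_sin_sq x
    rw [show 2*(x/2) = x by ring] at h1
    rw [mul_pow, _root_.sq_abs]
    nlinarith
  have h1 : (0:ℝ) ≤ ‖Complex.exp (x * I) - 1‖ := norm_nonneg _
  have h2 : (0:ℝ) ≤ 2 * |Real.sin (x / 2)| := by positivity
  nlinarith

lemma aux_sin_lower (y : ℝ) : 2 * |y - round y| ≤ |Real.sin (Real.pi * y)| := by
  set r : ℝ := y - round y with hr
  have hr2 : |r| ≤ 1 / 2 := abs_sub_round y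
  have h1 : Real.pi * y = Real.pi * r + (round y : ℤ) * Real.pi := by ring
  have h0 : |((-1:ℝ)) ^ (round y)| = 1 := by
    rcases Int.even_or_odd (round y) with h | h
    · rw [h.neg_one_zpow]; norm_num
    · rw [Odd.neg_one_zpow h]; norm_num
  rw [h1, Real.sin_add_int_mul_pi, abs_mul, h0, one_mul]
  have h2 : |Real.sin (Real.pi * r)| = |Real.sin (Real.pi * |r|)| := by
    rcases abs_choice r with h | h
    · rw [h]
    · rw [h]; rw [show Real.pi * -r = -(Real.pi * r) by ring, Real.sin_neg, abs_neg]
  have h3 : 2 / Real.pi * (Real.pi * |r|) ≤ Real.sin (Real.pi * |r|) :=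
    Real.mul_le_sin (by positivity)
      (by nlinarith [Real.pi_pos, abs_nonneg r])
  have h4 : 2 / Real.pi * (Real.pi * |r|) = 2 * |r| := by
    field_simp
  rw [h2]
  calc 2 * |r| = 2 / Real.pi * (Real.pi * |r|) := h4.symm
    _ ≤ Real.sin (Real.pi * |r|) := h3
    _ ≤ |Real.sin (Real.pi * |r|)| := le_abs_self _

lemma aux_summable_pow_exp {v ε : ℝ} (hv : 0 < v) (hε : 0 < ε) :
    Summable (fun k : ℤ => (|k| : ℝ) ^ v * Real.exp (-(|k| : ℝ) * ε)) := by
  have hnat : Summable (fun n : ℕ => ((n : ℝ)) ^ v * Real.exp (-(n : ℝ) * ε)) := by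
    have hr : ‖Real.exp (-ε)‖ < 1 := by
      rw [Real.norm_eq_abs, abs_of_pos (Real.exp_pos _)]
      exact Real.exp_lt_one_iff.mpr (by linarith)
    refine (summable_pow_mul_geometric_of_norm_lt_one ⌈v⌉₊ hr).of_nonneg_of_le
      (fun n => by positivity) (fun n => ?_)
    have he : Real.exp (-(n : ℝ) * ε) = Real.exp (-ε) ^ n := by
      rw [← Real.exp_nat_mul]; ring_nf
    rw [he]
    have hpow : (n : ℝ) ^ v ≤ (n : ℝ) ^ (⌈v⌉₊ : ℕ) := by
      rcases Nat.eq_zero_or_pos n with h | h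
      · subst h
        simp [Real.zero_rpow hv.ne']
      · rw [← Real.rpow_natCast]
        exact Real.rpow_le_rpow_of_exponent_le (by exact_mod_cast h) (Nat.le_ceil v)
    exact mul_le_mul_of_nonneg_right hpow (pow_nonneg (Real.exp_pos _).le n)
  refine Summable.of_nat_of_neg ?_ ?_
  · refine hnat.congr fun n => ?_
    simp
  · refine hnat.congr fun n => ?_
    simp

open Complex in
/-- Solution of the cohomological equation under a Diophantine condition on `ρ`. -/
theorem cohomological_equation_solution
    (a : ℝ → ℂ) (c : ℤ → ℂ) (δ ε K v : ℝ) (hδ : 0 < δ) (hε : 0 < ε)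
    (hK : 0 < K) (hv : 0 < v) (ρ : ℝ)
    (hper : ∀ t, a (t + 1) = a t)
    (hFourier : ∀ t : ℝ, a t = ∑' k : ℤ, c k * exp (2 * Real.pi * I * k * t))
    (hc0 : c 0 = 0)
    (hdecay : ∀ k : ℤ, ‖c k‖ < δ * Real.exp (-(|k| : ℝ) * ε))
    (hdioph : ∀ k : ℤ, k ≠ 0 → |(k : ℝ) * ρ - round ((k : ℝ) * ρ)| ≥ K * (|k| : ℝ) ^ (-v)) :
    Summable (fun k : {k : ℤ // k ≠ 0} =>
        ‖c k.1‖ / ‖exp (2 * Real.pi * I * k.1 * ρ) - 1‖) ∧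
      ∀ h : ℝ → ℂ,
        (h = fun t : ℝ => ∑' k : {k : ℤ // k ≠ 0},
            c k.1 / (exp (2 * Real.pi * I * k.1 * ρ) - 1) * exp (2 * Real.pi * I * k.1 * (t : ℂ))) →
        Continuous h ∧ (∀ t, h (t + 1) = h t) ∧ ∀ t, h (t + ρ) - h t = a t := by
  have harg : ∀ (k : ℤ) (x : ℝ),
      (2 * (Real.pi : ℂ) * I * (k : ℂ) * (x : ℂ)) = ((2 * Real.pi * ((k : ℝ) * x) : ℝ) : ℂ) * I := by
    intro k x; push_cast; ring
  have habs1 : ∀ (k : ℤ) (x : ℝ), ‖exp (2 * Real.pi * I * k * x)‖ = 1 := by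
    intro k x; rw [harg]; exact Complex.norm_exp_ofReal_mul_I _
  have hlow : ∀ k : ℤ, k ≠ 0 →
      2 * (K * (|k| : ℝ) ^ (-v)) ≤ ‖exp (2 * Real.pi * I * k * ρ) - 1‖ := by
    intro k hk
    have h1 := hdioph k hk
    rw [harg, aux_abs_exp_sub_one]
    rw [show (2 * Real.pi * ((k : ℝ) * ρ)) / 2 = Real.pi * ((k : ℝ) * ρ) by ring]
    have h3 := aux_sin_lower ((k : ℝ) * ρ)
    have h4 : (0 : ℝ) ≤ K * (|k| : ℝ) ^ (-v) := by
      have : (0 : ℝ) < (|k| : ℝ) := by exact_mod_cast abs_pos.mpr hk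
      positivity
    linarith
  have hupos : ∀ k : ℤ, k ≠ 0 → 0 < ‖exp (2 * Real.pi * I * k * ρ) - 1‖ := by
    intro k hk
    refine lt_of_lt_of_le ?_ (hlow k hk)
    have : (0 : ℝ) < (|k| : ℝ) := by exact_mod_cast abs_pos.mpr hk
    positivity
  set u : ℤ → ℝ :=
    fun k => ‖c k‖ / ‖exp (2 * Real.pi * I * k * ρ) - 1‖ with hu
  have hsum : Summable u := by
    refine Summable.of_nonneg_of_le (fun k => by positivity) (fun k => ?_)
      ((aux_summable_pow_exp hv hε).mul_left (δ / (2 * K)))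
    rcases eq_or_ne k 0 with rfl | hk
    · simp [hu, hc0, Real.zero_rpow hv.ne']
    · have hx : (0 : ℝ) < (|k| : ℝ) := by exact_mod_cast abs_pos.mpr hk
      have hden : (0 : ℝ) < 2 * (K * (|k| : ℝ) ^ (-v)) := by positivity
      calc u k ≤ (δ * Real.exp (-(|k| : ℝ) * ε)) / (2 * (K * (|k| : ℝ) ^ (-v))) :=
            div_le_div₀ (by positivity) (hdecay k).le hden (hlow k hk)
        _ = δ / (2 * K) * ((|k| : ℝ) ^ v * Real.exp (-(|k| : ℝ) * ε)) := by
            rw [Real.rpow_neg hx.le]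
            have hpv : (0 : ℝ) < (|k| : ℝ) ^ v := Real.rpow_pos_of_pos hx v
            field_simp
  refine ⟨hsum.subtype _, ?_⟩
  intro h hh
  have hdne : ∀ k : ℤ, k ≠ 0 → exp (2 * Real.pi * I * k * ρ) - 1 ≠ 0 := by
    intro k hk h0
    simpa [h0] using hupos k hk
  have hsub : Summable (fun k : {k : ℤ // k ≠ 0} => u k.1) := hsum.subtype _
  have hterm_norm : ∀ (k : {k : ℤ // k ≠ 0}) (t : ℝ),
      ‖c k.1 / (exp (2 * Real.pi * I * k.1 * ρ) - 1) * exp (2 * Real.pi * I * k.1 * (t : ℂ))‖ =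
        u k.1 := by
    intro k t
    rw [norm_mul, norm_div]
    rw [habs1 k.1 t, mul_one]
  have hcont : Continuous h := by
    rw [hh]
    refine continuous_tsum (fun k => ?_) hsub (fun k t => le_of_eq (hterm_norm k t))
    exact continuous_const.mul (Complex.continuous_exp.comp
      (continuous_const.mul Complex.continuous_ofReal))
  refine ⟨hcont, ?_, ?_⟩
  · intro t
    rw [hh]
    refine tsum_congr fun k => ?_
    have h1 : ((t + 1 : ℝ) : ℂ) = (t : ℂ) + 1 := by push_cast; ring
    rw [h1, mul_add, Complex.exp_add, mul_one]
    have he1 : exp (2 * (Real.pi : ℂ) * I * (k.1 : ℂ)) = 1 := by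
      rw [show (2 * (Real.pi : ℂ) * I * (k.1 : ℂ)) = (k.1 : ℂ) * (2 * Real.pi * I) by ring]
      exact Complex.exp_int_mul_two_pi_mul_I k.1
    rw [he1, mul_one]
  · intro t
    rw [hh]
    have hs1 : Summable (fun k : {k : ℤ // k ≠ 0} =>
        c k.1 / (exp (2 * Real.pi * I * k.1 * ρ) - 1) *
          exp (2 * Real.pi * I * k.1 * ((t + ρ : ℝ) : ℂ))) :=
      Summable.of_norm (hsub.congr fun k => (hterm_norm k (t + ρ)).symm)
    have hs2 : Summable (fun k : {k : ℤ // k ≠ 0} =>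
        c k.1 / (exp (2 * Real.pi * I * k.1 * ρ) - 1) *
          exp (2 * Real.pi * I * k.1 * ((t : ℝ) : ℂ))) :=
      Summable.of_norm (hsub.congr fun k => (hterm_norm k t).symm)
    beta_reduce
    rw [← hs1.tsum_sub hs2, hFourier t]
    have hfg : ∀ k : {k : ℤ // k ≠ 0},
        c k.1 / (exp (2 * Real.pi * I * k.1 * ρ) - 1) *
            exp (2 * Real.pi * I * k.1 * ((t + ρ : ℝ) : ℂ)) -
          c k.1 / (exp (2 * Real.pi * I * k.1 * ρ) - 1) *
            exp (2 * Real.pi * I * k.1 * ((t : ℝ) : ℂ)) =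
          c k.1 * exp (2 * Real.pi * I * k.1 * (t : ℂ)) := by
      intro k
      have h1 : ((t + ρ : ℝ) : ℂ) = (t : ℂ) + (ρ : ℂ) := by push_cast; ring
      rw [h1, mul_add, Complex.exp_add]
      have hd := hdne k.1 k.2
      field_simp
    rw [tsum_congr hfg]
    refine tsum_subtype_eq_of_support_subset
      (f := fun k : ℤ => c k * exp (2 * Real.pi * I * k * (t : ℂ))) (s := {k : ℤ | k ≠ 0}) ?_
    intro k hk
    by_contra hk0
    simp only [Set.mem_setOf_eq, not_not] at hk0
    apply hk
    simp [hk0, hc0]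
end
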